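/- For a pair of random variables (X, Y) and an r-round interactive protocol U_1, ..., U_r (Markov chains as in interactive protocols), Σ_{i odd} I(U_i; X | U^{i-1}) + Σ_{i even} I(U_i; Y | U^{i-1}) = I(U^r; X, Y). -/
import Mathlib

open Finset

variable {Ω : Type*} [Fintype Ω]

/-- Shannon entropy of the discrete random variable `T` under the pmf `p`. -/
noncomputable def ent {α : Type*} [DecidableEq α] (p : Ω → ℝ) (T : Ω → α) : ℝ :=
  -∑ ω, p ω * Real.log (∑ ω', if T ω' = T ω then p ω' else 0)

/-- Mutual information `I(X;Y)` under the pmf `p`. -/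
noncomputable def mi {α β : Type*} [DecidableEq α] [DecidableEq β]
    (p : Ω → ℝ) (X : Ω → α) (Y : Ω → β) : ℝ :=
  ent p X + ent p Y - ent p (fun ω => (X ω, Y ω))

/-- Conditional mutual information `I(X;Y|Z)` under the pmf `p`. -/
noncomputable def cmi {α β γ : Type*} [DecidableEq α] [DecidableEq β] [DecidableEq γ]
    (p : Ω → ℝ) (X : Ω → α) (Y : Ω → β) (Z : Ω → γ) : ℝ :=
  ent p (fun ω => (X ω, Z ω)) + ent p (fun ω => (Y ω, Z ω))
    - ent p (fun ω => (X ω, Y ω, Z ω)) - ent p Z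

/-- The transcript `U^{i-1}` of the first `i` messages (indices `0, …, i-1`). -/
def hist {r : ℕ} {𝒰 : Type*} (U : Fin r → Ω → 𝒰) (i : ℕ) : Ω → (Fin r → Option 𝒰) :=
  fun ω j => if (j : ℕ) < i then some (U j ω) else none

lemma ent_congr {α β : Type*} [DecidableEq α] [DecidableEq β] (p : Ω → ℝ)
    {T : Ω → α} {S : Ω → β} (h : ∀ ω ω', T ω = T ω' ↔ S ω = S ω') :
    ent p T = ent p S := by
  unfold ent
  congr 1
  refine Finset.sum_congr rfl fun ω _ => ?_
  congr 2
  refine Finset.sum_congr rfl fun ω' _ => ?_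
  exact if_congr (h ω' ω) rfl rfl

lemma hist_succ_iff {r : ℕ} {𝒰 : Type*} (U : Fin r → Ω → 𝒰) (i : Fin r) (ω ω' : Ω) :
    hist U ((i:ℕ)+1) ω = hist U ((i:ℕ)+1) ω'
    ↔ U i ω = U i ω' ∧ hist U (i:ℕ) ω = hist U (i:ℕ) ω' := by
  unfold hist
  constructor
  · intro h
    refine ⟨?_, funext fun j => ?_⟩
    · have := congrFun h i
      simp at this; exact this
    · have := congrFun h j
      by_cases hj : (j:ℕ) < (i:ℕ)
      · simp [hj, Nat.lt_succ_of_lt hj] at this ⊢; exact this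
      · simp [hj]
  · rintro ⟨h1, h2⟩
    funext j
    by_cases hj : (j:ℕ) < (i:ℕ)+1
    · by_cases hj' : (j:ℕ) < (i:ℕ)
      · have := congrFun h2 j
        simp [hj, hj'] at this ⊢; exact this
      · have : j = i := Fin.ext (Nat.le_antisymm (Nat.lt_succ_iff.mp hj) (Nat.le_of_not_lt hj'))
        subst this
        simp [hj, h1]
    · simp [hj]

section Steps

variable {𝒳 𝒴 𝒰 : Type*} [DecidableEq 𝒳] [DecidableEq 𝒴] [DecidableEq 𝒰]
  {r : ℕ} (p : Ω → ℝ) (X : Ω → 𝒳) (Y : Ω → 𝒴) (U : Fin r → Ω → 𝒰)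

lemma step_even (i : Fin r) :
    cmi p (U i) X (hist U (i:ℕ)) + cmi p (U i) Y (fun ω => (X ω, hist U (i:ℕ) ω))
    = mi p (hist U ((i:ℕ)+1)) (fun ω => (X ω, Y ω))
      - mi p (hist U (i:ℕ)) (fun ω => (X ω, Y ω)) := by
  have e1 : ent p (hist U ((i:ℕ)+1)) = ent p (fun ω => (U i ω, hist U (i:ℕ) ω)) := by
    refine ent_congr p fun ω ω' => ?_
    rw [hist_succ_iff]
    simp [Prod.ext_iff]
  have e2 : ent p (fun ω => (hist U ((i:ℕ)+1) ω, X ω, Y ω))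
      = ent p (fun ω => (U i ω, Y ω, X ω, hist U (i:ℕ) ω)) := by
    refine ent_congr p fun ω ω' => ?_
    simp only [Prod.mk.injEq, hist_succ_iff]
    tauto
  have e3 : ent p (fun ω => (hist U (i:ℕ) ω, X ω, Y ω))
      = ent p (fun ω => (Y ω, X ω, hist U (i:ℕ) ω)) := by
    refine ent_congr p fun ω ω' => ?_
    simp only [Prod.mk.injEq]
    tauto
  simp only [cmi, mi]
  linarith [e1, e2, e3]

lemma step_odd (i : Fin r) :
    cmi p (U i) Y (hist U (i:ℕ)) + cmi p (U i) X (fun ω => (Y ω, hist U (i:ℕ) ω))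
    = mi p (hist U ((i:ℕ)+1)) (fun ω => (X ω, Y ω))
      - mi p (hist U (i:ℕ)) (fun ω => (X ω, Y ω)) := by
  have e1 : ent p (hist U ((i:ℕ)+1)) = ent p (fun ω => (U i ω, hist U (i:ℕ) ω)) := by
    refine ent_congr p fun ω ω' => ?_
    rw [hist_succ_iff]
    simp [Prod.ext_iff]
  have e2 : ent p (fun ω => (hist U ((i:ℕ)+1) ω, X ω, Y ω))
      = ent p (fun ω => (U i ω, X ω, Y ω, hist U (i:ℕ) ω)) := by
    refine ent_congr p fun ω ω' => ?_
    simp only [Prod.mk.injEq, hist_succ_iff]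
    tauto
  have e3 : ent p (fun ω => (hist U (i:ℕ) ω, X ω, Y ω))
      = ent p (fun ω => (X ω, Y ω, hist U (i:ℕ) ω)) := by
    refine ent_congr p fun ω ω' => ?_
    simp only [Prod.mk.injEq]
    tauto
  simp only [cmi, mi]
  linarith [e1, e2, e3]

lemma mi_hist_zero (hp1 : ∑ ω, p ω = 1) :
    mi p (hist U 0) (fun ω => (X ω, Y ω)) = 0 := by
  have hz : ∀ ω : Ω, hist U 0 ω = fun _ => none := fun ω => funext fun j => by simp [hist]
  have h0 : ent p (hist U 0) = 0 := by
    simp [ent, hz, hp1]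
  have h1 : ent p (fun ω => (hist U 0 ω, X ω, Y ω))
      = ent p (fun ω => (X ω, Y ω)) := by
    refine ent_congr p fun ω ω' => ?_
    simp [hz, Prod.ext_iff]
  simp only [mi]
  rw [h0, h1]
  ring

end Steps

/-- For an `r`-round interactive protocol `U_1, …, U_r`
(indexed `0, …, r-1`; index `i` corresponds to round `i+1`, odd rounds are sent
by Alice) satisfying the interactive Markov chain conditions,
`Σ_{i odd} I(U_i; X | U^{i-1}) + Σ_{i even} I(U_i; Y | U^{i-1}) = I(U^r; X, Y)`. -/
theorem stmt8 {𝒳 𝒴 𝒰 : Type*} [DecidableEq 𝒳] [DecidableEq 𝒴] [DecidableEq 𝒰]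
    (r : ℕ) (p : Ω → ℝ) (hp : ∀ ω, 0 ≤ p ω) (hp1 : ∑ ω, p ω = 1)
    (X : Ω → 𝒳) (Y : Ω → 𝒴) (U : Fin r → Ω → 𝒰)
    (hmarkovA : ∀ i : Fin r, Even (i : ℕ) →
      cmi p (U i) Y (fun ω => (X ω, hist U (i : ℕ) ω)) = 0)
    (hmarkovB : ∀ i : Fin r, ¬ Even (i : ℕ) →
      cmi p (U i) X (fun ω => (Y ω, hist U (i : ℕ) ω)) = 0) :
    (∑ i : Fin r,
        if Even (i : ℕ) then cmi p (U i) X (hist U (i : ℕ))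
        else cmi p (U i) Y (hist U (i : ℕ)))
      = mi p (hist U r) (fun ω => (X ω, Y ω)) := by
  set f : ℕ → ℝ := fun n => mi p (hist U n) (fun ω => (X ω, Y ω)) with hf
  have key : ∀ i : Fin r,
      (if Even (i:ℕ) then cmi p (U i) X (hist U (i:ℕ))
        else cmi p (U i) Y (hist U (i:ℕ))) = f ((i:ℕ)+1) - f (i:ℕ) := by
    intro i
    by_cases h : Even (i:ℕ)
    · rw [if_pos h]
      have := step_even p X Y U i
      have hm := hmarkovA i h
      simp only [hf]
      linarith
    · rw [if_neg h]
      have := step_odd p X Y U i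
      have hm := hmarkovB i h
      simp only [hf]
      linarith
  calc (∑ i : Fin r,
        if Even (i:ℕ) then cmi p (U i) X (hist U (i:ℕ))
        else cmi p (U i) Y (hist U (i:ℕ)))
      = ∑ i : Fin r, (f ((i:ℕ)+1) - f (i:ℕ)) := Finset.sum_congr rfl fun i _ => key i
    _ = ∑ n ∈ Finset.range r, (f (n+1) - f n) := Fin.sum_univ_eq_sum_range (fun n => f (n+1) - f n) r
    _ = f r - f 0 := Finset.sum_range_sub f r
    _ = f r := by rw [hf]; simp [mi_hist_zero p X Y U hp1]
    _ = mi p (hist U r) (fun ω => (X ω, Y ω)) := rfl
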